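/- Fix an integer n ≥ 1, set N = 2n + 3, and let V, F, the Verlinde product, and the structure constants N_{ab}^c be as defined. Then for all integers a, b with 0 ≤ b ≤ a ≤ n and every integer c with n < c ≤ a + b and a + b + c even, one has N_{ab}^{2n+1−c} = −1 (note that 1 ≤ 2n+1−c ≤ n). In particular, whenever a + b > n the product e_a · e_b has at least one strictly negative structure constant. -/

import Mathlib

open BigOperators

/-- The folding map `F : ℕ → V` for type `A₂⁽²⁾` at level `2n`, where
`V = Fin (n+1) → ℤ` is the free ℤ-module with basis `e₀, …, e_n` and
`N = 2n + 3`:  `F m = e_{m'}` if `m ≡ m' (mod N)` with `0 ≤ m' ≤ n`;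
`F m = 0` if `m ≡ N - 1 (mod N)`; `F m = -e_{m'}` if `m + m' + 2 ≡ 0 (mod N)`
with `0 ≤ m' ≤ n`. -/
def foldA2 (n m : ℕ) : Fin (n + 1) → ℤ :=
  if h : m % (2 * n + 3) ≤ n then
    Pi.single (⟨m % (2 * n + 3), by omega⟩ : Fin (n + 1)) 1
  else if h2 : m % (2 * n + 3) = 2 * n + 2 then 0
  else - Pi.single (⟨2 * n + 1 - m % (2 * n + 3), by omega⟩ : Fin (n + 1)) 1

/-- The basis vector `e_m` of `V = Fin (n+1) → ℤ` (zero if `m > n`). -/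
def eN (n m : ℕ) : Fin (n + 1) → ℤ :=
  if h : m ≤ n then Pi.single (⟨m, by omega⟩ : Fin (n + 1)) 1 else 0

/-- The Verlinde product on `V = Fin (n+1) → ℤ`: the ℤ-bilinear product with
`e_a · e_b = ∑_{i=0}^{min a b} F (a + b - 2 i)`. -/
def vmul (n : ℕ) (x y : Fin (n + 1) → ℤ) : Fin (n + 1) → ℤ :=
  fun c => ∑ a : Fin (n + 1), ∑ b : Fin (n + 1),
    x a * y b * (∑ i ∈ Finset.range (min a.1 b.1 + 1), foldA2 n (a.1 + b.1 - 2 * i)) c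

/-- The structure constants `N_{ab}^c` of the Verlinde product, defined by
`e_a · e_b = ∑_c N_{ab}^c e_c`. -/
def Nconst (n a b c : ℕ) : ℤ :=
  if h : c ≤ n then vmul n (eN n a) (eN n b) ⟨c, by omega⟩ else 0

lemma fold_eval (n m c : ℕ) (hm : m ≤ 2 * n) (hc1 : n < c) (hc2 : c ≤ 2 * n)
    (hpar : (m + c) % 2 = 0) (hle : 2 * n + 1 - c ≤ n) :
    foldA2 n m ⟨2 * n + 1 - c, by omega⟩ = if m = c then -1 else 0 := by
  have hmod : m % (2 * n + 3) = m := Nat.mod_eq_of_lt (by omega)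
  unfold foldA2
  simp only [hmod]
  rcases Nat.lt_or_ge n m with hnm | hnm
  · rw [dif_neg (by omega), dif_neg (by omega)]
    by_cases hmc : m = c
    · rw [if_pos hmc, Pi.neg_apply, Pi.single_apply,
        if_pos (by simp only [Fin.mk.injEq]; omega)]
    · rw [if_neg hmc, Pi.neg_apply, Pi.single_apply,
        if_neg (by simp only [Fin.mk.injEq]; omega)]
      simp
  · rw [dif_pos (by omega), if_neg (by omega), Pi.single_apply,
      if_neg (by simp only [Fin.mk.injEq]; omega)]

lemma sum_fold (n a b c : ℕ) (hb : b ≤ a) (ha : a ≤ n) (hc1 : n < c) (hc2 : c ≤ a + b)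
    (hpar : (a + b + c) % 2 = 0) :
    ∑ i ∈ Finset.range (min a b + 1), foldA2 n (a + b - 2 * i) ⟨2 * n + 1 - c, by omega⟩
      = -1 := by
  have hmin : min a b = b := min_eq_right hb
  rw [hmin]
  have key : ∀ i ∈ Finset.range (b + 1),
      foldA2 n (a + b - 2 * i) ⟨2 * n + 1 - c, by omega⟩
        = if i = (a + b - c) / 2 then (-1 : ℤ) else 0 := by
    intro i hi
    simp only [Finset.mem_range] at hi
    rw [fold_eval n _ c (by omega) hc1 (by omega) (by omega) (by omega)]
    congr 1
    simp only [eq_iff_iff]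
    omega
  rw [Finset.sum_congr rfl key, Finset.sum_ite_eq' (Finset.range (b + 1)) _ (fun _ => (-1 : ℤ)),
    if_pos (by simp only [Finset.mem_range]; omega)]

/-- Negative structure constants in the Verlinde algebra of type `A₂⁽²⁾` at even
level `2n`: for `0 ≤ b ≤ a ≤ n` and `n < c ≤ a + b` with `a + b + c` even, one
has `N_{ab}^{2n+1-c} = -1` (and `1 ≤ 2n+1-c ≤ n`).  In particular, whenever
`a + b > n` the product `e_a · e_b` has a strictly negative structure
constant. -/
theorem Nconst_negative (n : ℕ) (hn : 1 ≤ n) :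
    (∀ a b c : ℕ, b ≤ a → a ≤ n → n < c → c ≤ a + b → (a + b + c) % 2 = 0 →
      (1 ≤ 2 * n + 1 - c ∧ 2 * n + 1 - c ≤ n) ∧ Nconst n a b (2 * n + 1 - c) = -1) ∧
    (∀ a b : ℕ, b ≤ a → a ≤ n → n < a + b →
      ∃ c : ℕ, c ≤ n ∧ Nconst n a b c < 0) := by
  have main : ∀ a b c : ℕ, b ≤ a → a ≤ n → n < c → c ≤ a + b → (a + b + c) % 2 = 0 →
      Nconst n a b (2 * n + 1 - c) = -1 := by
    intro a b c hb ha hc1 hc2 hpar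
    have hle : 2 * n + 1 - c ≤ n := by omega
    rw [Nconst, dif_pos hle, vmul]
    rw [show eN n a = Pi.single (⟨a, by omega⟩ : Fin (n + 1)) 1 from dif_pos ha,
        show eN n b = Pi.single (⟨b, by omega⟩ : Fin (n + 1)) 1 from dif_pos (le_trans hb ha)]
    simp only [Pi.single_apply, ite_mul, one_mul, zero_mul]
    rw [Fintype.sum_eq_single (⟨a, by omega⟩ : Fin (n + 1)) (by intro x hx; simp [hx]),
      Fintype.sum_eq_single (⟨b, by omega⟩ : Fin (n + 1)) (by intro x hx; simp [hx]),
      if_pos rfl, if_pos rfl, Finset.sum_apply]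
    exact sum_fold n a b c hb ha hc1 hc2 hpar
  refine ⟨fun a b c hb ha hc1 hc2 hpar => ⟨⟨by omega, by omega⟩, main a b c hb ha hc1 hc2 hpar⟩,
    fun a b hb ha hab => ⟨2 * n + 1 - (a + b), by omega, ?_⟩⟩
  rw [main a b (a + b) hb ha hab le_rfl (by omega)]
  norm_num
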